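/- Let μ be a Borel probability measure on ℝ uniquely determined by its moments, and (μ_n) a sequence of Borel probability measures such that ∫ t^p dμ_n(t) → ∫ t^p dμ(t) for every p ∈ ℕ. Then μ_n converges weakly to μ. -/

import Mathlib

open MeasureTheory Filter

section MethodOfMomentsAux
open Set Topology ENNReal NNReal


noncomputable def mcdf (ν : Measure ℝ) (x : ℝ) : ℝ := (ν (Iic x)).toReal

lemma mcdf_nonneg (ν : Measure ℝ) (x : ℝ) : 0 ≤ mcdf ν x := ENNReal.toReal_nonneg

lemma mcdf_le_one (ν : Measure ℝ) [IsProbabilityMeasure ν] (x : ℝ) : mcdf ν x ≤ 1 := by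
  rw [mcdf, show (1:ℝ) = (1:ℝ≥0∞).toReal by simp]
  exact ENNReal.toReal_mono one_ne_top prob_le_one

lemma mcdf_mono (ν : Measure ℝ) [IsProbabilityMeasure ν] : Monotone (mcdf ν) := by
  intro a b hab
  exact ENNReal.toReal_mono (measure_ne_top ν _) (measure_mono (Iic_subset_Iic.2 hab))

lemma exists_subseq_rat (ν : ℕ → Measure ℝ) [∀ n, IsProbabilityMeasure (ν n)] :
    ∃ (φ : ℕ → ℕ) (G : ℚ → ℝ), StrictMono φ ∧ (∀ q, G q ∈ Icc (0:ℝ) 1) ∧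
      (∀ q : ℚ, Tendsto (fun n => mcdf (ν (φ n)) q) atTop (𝓝 (G q))) := by
  set S : ℕ → (ℚ → Icc (0:ℝ) 1) := fun n q =>
    ⟨mcdf (ν n) q, ⟨mcdf_nonneg _ _, mcdf_le_one _ _⟩⟩ with hS
  obtain ⟨a, φ, hφ, ha⟩ := CompactSpace.tendsto_subseq S
  refine ⟨φ, fun q => (a q : ℝ), hφ, fun q => (a q).2, fun q => ?_⟩
  have := tendsto_pi_nhds.1 ha q
  exact ((continuous_subtype_val.tendsto _).comp this : _)

noncomputable def ratExt (G : ℚ → ℝ) (x : ℝ) : ℝ := sInf (G '' {q : ℚ | x < (q:ℝ)})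

section ratExt
variable {G : ℚ → ℝ} (hG0 : ∀ q, 0 ≤ G q) (hGmono : ∀ q r : ℚ, q ≤ r → G q ≤ G r)

lemma ratExt_set_nonempty (x : ℝ) : (G '' {q : ℚ | x < (q:ℝ)}).Nonempty := by
  obtain ⟨q, hq⟩ := exists_rat_gt x
  exact ⟨G q, ⟨q, hq, rfl⟩⟩

include hG0 in
lemma ratExt_bddBelow (x : ℝ) : BddBelow (G '' {q : ℚ | x < (q:ℝ)}) :=
  ⟨0, fun y ⟨q, _, hq⟩ => hq ▸ hG0 q⟩

include hG0 in
lemma ratExt_le {x : ℝ} {q : ℚ} (hq : x < (q:ℝ)) : ratExt G x ≤ G q :=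
  csInf_le (ratExt_bddBelow hG0 x) ⟨q, hq, rfl⟩

include hGmono in
lemma le_ratExt {x : ℝ} {q : ℚ} (hq : (q:ℝ) ≤ x) : G q ≤ ratExt G x := by
  apply le_csInf (ratExt_set_nonempty x)
  rintro y ⟨r, hr, rfl⟩
  exact hGmono q r (by exact_mod_cast hq.trans_lt hr |>.le)

include hG0 hGmono in
lemma ratExt_mono : Monotone (ratExt G) := by
  intro x y hxy
  apply le_csInf (ratExt_set_nonempty y)
  rintro z ⟨r, hr, rfl⟩
  exact ratExt_le hG0 (lt_of_le_of_lt hxy hr)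

include hG0 hGmono in
lemma ratExt_right_continuous (x : ℝ) : ContinuousWithinAt (ratExt G) (Ici x) x := by
  have hmono := ratExt_mono hG0 hGmono
  rw [ContinuousWithinAt]
  apply tendsto_order.2
  constructor
  · intro a ha
    filter_upwards [self_mem_nhdsWithin] with y (hy : x ≤ y)
    exact lt_of_lt_of_le ha (hmono hy)
  · intro b hb
    obtain ⟨z, hz, hzb⟩ : ∃ z : ℚ, x < (z:ℝ) ∧ G z < b := by
      by_contra h
      push_neg at h
      have : b ≤ ratExt G x := le_csInf (ratExt_set_nonempty x) (by rintro y ⟨r, hr, rfl⟩; exact h r hr)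
      exact absurd hb this.not_gt
    filter_upwards [Ico_mem_nhdsGE hz] with y hy
    calc ratExt G y ≤ G z := ratExt_le hG0 hy.2
    _ < b := hzb

end ratExt

noncomputable def ratExtStj (G : ℚ → ℝ) (hG0 : ∀ q, 0 ≤ G q)
    (hGmono : ∀ q r : ℚ, q ≤ r → G q ≤ G r) : StieltjesFunction ℝ where
  toFun := ratExt G
  mono' := ratExt_mono hG0 hGmono
  right_continuous' := ratExt_right_continuous hG0 hGmono

lemma ratExtStj_apply (G : ℚ → ℝ) (hG0 : ∀ q, 0 ≤ G q)
    (hGmono : ∀ q r : ℚ, q ≤ r → G q ≤ G r) (x : ℝ) : ratExtStj G hG0 hGmono x = ratExt G x := rfl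


lemma tendsto_at_continuousAt {Fn : ℕ → ℝ → ℝ} {G : ℚ → ℝ}
    (hFmono : ∀ n, Monotone (Fn n)) (hG0 : ∀ q, 0 ≤ G q)
    (hGmono : ∀ q r : ℚ, q ≤ r → G q ≤ G r)
    (hconv : ∀ q : ℚ, Tendsto (fun n => Fn n q) atTop (𝓝 (G q)))
    {x : ℝ} (hx : ContinuousAt (ratExt G) x) :
    Tendsto (fun n => Fn n x) atTop (𝓝 (ratExt G x)) := by
  apply tendsto_order.2
  constructor
  · intro a ha
    obtain ⟨ε, hε, hball⟩ := Metric.eventually_nhds_iff.1 (hx.tendsto.eventually (eventually_gt_nhds ha))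
    set y := x - ε/2 with hy
    have hyx : y < x := by simp [hy]; positivity
    have hay : a < ratExt G y := hball (by simp [hy, abs_of_nonpos, hε.le]; rw [abs_of_pos (by positivity)]; linarith)
    obtain ⟨q, hq1, hq2⟩ := exists_rat_btwn hyx
    have hGq : a < G q := lt_of_lt_of_le hay (ratExt_le hG0 hq1)
    filter_upwards [(hconv q).eventually (eventually_gt_nhds hGq)] with n hn
    exact lt_of_lt_of_le hn (hFmono n hq2.le)
  · intro b hb
    obtain ⟨g, ⟨q, hq, rfl⟩, hgb⟩ := exists_lt_of_csInf_lt (ratExt_set_nonempty x) hb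
    filter_upwards [(hconv q).eventually (eventually_lt_nhds hgb)] with n hn
    exact lt_of_le_of_lt (hFmono n hq.le) hn


lemma ratExt_nonneg {G : ℚ → ℝ} (hG0 : ∀ q, 0 ≤ G q) (x : ℝ) : 0 ≤ ratExt G x :=
  le_csInf (ratExt_set_nonempty x) (by rintro y ⟨r, _, rfl⟩; exact hG0 r)

lemma ratExt_le_one {G : ℚ → ℝ} (hG0 : ∀ q, 0 ≤ G q) (hG1 : ∀ q, G q ≤ 1) (x : ℝ) :
    ratExt G x ≤ 1 := by
  obtain ⟨q, hq⟩ := exists_rat_gt x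
  exact (ratExt_le hG0 hq).trans (hG1 q)

lemma ratExt_tendsto_atBot {G : ℚ → ℝ} (hG0 : ∀ q, 0 ≤ G q)
    (htail : ∀ b : ℝ, 0 < b → ∃ x₀ : ℝ, ∀ q : ℚ, (q:ℝ) ≤ x₀ → G q ≤ b) :
    Tendsto (ratExt G) atBot (𝓝 0) := by
  apply tendsto_order.2
  refine ⟨fun a ha => Eventually.of_forall fun x => lt_of_lt_of_le ha (ratExt_nonneg hG0 x), ?_⟩
  intro b hb
  obtain ⟨x₀, hx₀⟩ := htail (b/2) (by positivity)
  filter_upwards [eventually_le_atBot (x₀ - 1)] with x (hx : x ≤ x₀ - 1)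
  obtain ⟨q, hq1, hq2⟩ := exists_rat_btwn (show x < x₀ by linarith)
  calc ratExt G x ≤ G q := ratExt_le hG0 hq1
  _ ≤ b/2 := hx₀ q hq2.le
  _ < b := by linarith

lemma ratExt_tendsto_atTop {G : ℚ → ℝ} (hG0 : ∀ q, 0 ≤ G q) (hG1 : ∀ q, G q ≤ 1)
    (htail : ∀ b : ℝ, 0 < b → ∃ x₀ : ℝ, ∀ q : ℚ, x₀ ≤ (q:ℝ) → 1 - b ≤ G q) :
    Tendsto (ratExt G) atTop (𝓝 1) := by
  apply tendsto_order.2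
  constructor
  · intro a ha
    obtain ⟨x₀, hx₀⟩ := htail ((1-a)/2) (by linarith)
    filter_upwards [eventually_ge_atTop x₀] with x (hx : x₀ ≤ x)
    have : ∀ y ∈ G '' {q : ℚ | x < (q:ℝ)}, (1 - (1-a)/2) ≤ y := by
      rintro y ⟨r, hr, rfl⟩
      exact hx₀ r (hx.trans hr.le)
    have h2 := le_csInf (ratExt_set_nonempty x) this
    have : a < 1 - (1-a)/2 := by linarith
    exact lt_of_lt_of_le this h2
  · intro b hb
    exact Eventually.of_forall fun x => lt_of_le_of_lt (ratExt_le_one hG0 hG1 x) hb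


lemma tail_bound (ν : Measure ℝ) [IsProbabilityMeasure ν]
    (hint : Integrable (fun t => t^2) ν) {M R : ℝ} (hM : ∫ t, t^2 ∂ν ≤ M) (hR : 0 < R) :
    (ν {x : ℝ | R ≤ |x|}).toReal ≤ M / R^2 := by
  have key := mul_meas_ge_le_integral_of_nonneg
    (Eventually.of_forall fun x : ℝ => sq_nonneg x) hint (R^2)
  have hsub : {x : ℝ | R ≤ |x|} ⊆ {x : ℝ | R^2 ≤ x^2} := by
    intro x hx
    calc R^2 ≤ |x|^2 := pow_le_pow_left₀ hR.le hx 2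
    _ = x^2 := sq_abs x
  have hmono : (ν {x : ℝ | R ≤ |x|}).toReal ≤ (ν {x : ℝ | R^2 ≤ x^2}).toReal :=
    ENNReal.toReal_mono (measure_ne_top _ _) (measure_mono hsub)
  refine hmono.trans ?_
  rw [le_div_iff₀ (by positivity)]
  calc (ν {x : ℝ | R^2 ≤ x^2}).toReal * R^2 = R^2 * (ν {x : ℝ | R^2 ≤ x^2}).toReal := mul_comm _ _
  _ ≤ ∫ t, t^2 ∂ν := key
  _ ≤ M := hM

lemma mcdf_tail_low (ν : Measure ℝ) [IsProbabilityMeasure ν]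
    (hint : Integrable (fun t => t^2) ν) {M R x : ℝ} (hM : ∫ t, t^2 ∂ν ≤ M) (hR : 0 < R)
    (hx : x ≤ -R) : mcdf ν x ≤ M / R^2 := by
  refine le_trans ?_ (tail_bound ν hint hM hR)
  apply ENNReal.toReal_mono (measure_ne_top _ _)
  apply measure_mono
  intro y (hy : y ≤ x)
  have h1 : y ≤ -R := hy.trans hx
  have : R ≤ -y := by linarith
  exact this.trans (neg_le_abs y)

lemma mcdf_tail_high (ν : Measure ℝ) [IsProbabilityMeasure ν]
    (hint : Integrable (fun t => t^2) ν) {M R x : ℝ} (hM : ∫ t, t^2 ∂ν ≤ M) (hR : 0 < R)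
    (hx : R ≤ x) : 1 - M / R^2 ≤ mcdf ν x := by
  have hadd : ν (Iic x) + ν (Ioi x) = 1 := by
    have := measure_add_measure_compl (μ := ν) (measurableSet_Iic (a := x))
    rwa [compl_Iic, measure_univ] at this
  have hadd' : mcdf ν x + (ν (Ioi x)).toReal = 1 := by
    rw [mcdf, ← ENNReal.toReal_add (measure_ne_top _ _) (measure_ne_top _ _), hadd]
    simp
  have htail : (ν (Ioi x)).toReal ≤ M / R^2 := by
    refine le_trans ?_ (tail_bound ν hint hM hR)
    apply ENNReal.toReal_mono (measure_ne_top _ _)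
    apply measure_mono
    intro y (hy : x < y)
    exact ((hx.trans hy.le).trans (le_abs_self y) : R ≤ |y|)
  linarith

lemma biUnion_Ioc_succ {a : ℕ → ℝ} (ha : Monotone a) (m : ℕ) (hm : 0 < m) :
    ⋃ i ∈ Finset.range m, Ioc (a i) (a (i+1)) = Ioc (a 0) (a m) := by
  induction m with
  | zero => omega
  | succ k ih =>
    rcases Nat.eq_zero_or_pos k with rfl | hk
    · simp
    · rw [Finset.range_add_one]
      simp only [Finset.mem_insert, Set.iUnion_iUnion_eq_or_left]
      rw [ih hk, Set.union_comm, Set.Ioc_union_Ioc_eq_Ioc (ha (Nat.zero_le k)) (ha (Nat.le_succ k))]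

lemma isOpen_le_liminf
    (ν : ℕ → Measure ℝ) [∀ n, IsProbabilityMeasure (ν n)]
    (ρ : Measure ℝ) [IsProbabilityMeasure ρ]
    {D : Set ℝ} (hD : Dense D)
    (hconv : ∀ a ∈ D, ∀ b ∈ D, a < b →
      Tendsto (fun n => (ν n (Ioc a b)).toReal) atTop (𝓝 ((ρ (Ioc a b)).toReal)))
    {U : Set ℝ} (hU : IsOpen U) : ρ U ≤ atTop.liminf (fun n => ν n U) := by
  rw [hU.measure_eq_iSup_isCompact]
  refine iSup₂_le fun K hKU => iSup_le fun hK => ?_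
  -- suffices to find B measurable with K ⊆ B ⊆ U and ρ B = lim ν n B
  suffices h : ∃ B : Set ℝ, MeasurableSet B ∧ K ⊆ B ∧ B ⊆ U ∧
      Tendsto (fun n => ν n B) atTop (𝓝 (ρ B)) by
    obtain ⟨B, _, hKB, hBU, hTB⟩ := h
    calc ρ K ≤ ρ B := measure_mono hKB
    _ = atTop.liminf (fun n => ν n B) := hTB.liminf_eq.symm
    _ ≤ atTop.liminf (fun n => ν n U) :=
        liminf_le_liminf (Eventually.of_forall fun n => measure_mono hBU)
  classical
  rcases K.eq_empty_or_nonempty with rfl | hKne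
  · exact ⟨∅, MeasurableSet.empty, subset_rfl, empty_subset _, by simp⟩
  obtain ⟨δ, hδ, hthick⟩ := hK.exists_thickening_subset_open hU hKU
  obtain ⟨r, hr⟩ := hK.isBounded.subset_closedBall 0
  set R : ℝ := |r| + 1 with hR
  have hKR : K ⊆ Icc (-R) R := by
    refine hr.trans ?_
    rw [Real.closedBall_eq_Icc]
    apply Icc_subset_Icc <;> simp [hR] <;> cases abs_cases r <;> linarith
  set η : ℝ := min (δ/2) 1 with hη
  have hη0 : 0 < η := by positivity
  have hη1 : η ≤ 1 := min_le_right _ _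
  have hηδ : 3 * η / 2 < δ := by
    have : η ≤ δ/2 := min_le_left _ _
    linarith
  set c : ℕ → ℝ := fun i => -R - 1 + i * η with hc
  have hsel : ∀ i : ℕ, ∃ x ∈ D, x ∈ Ioo (c i) (c i + η/2) := by
    intro i
    exact hD.exists_mem_open isOpen_Ioo (by rw [Set.nonempty_Ioo]; linarith)
  choose a haD haI using hsel
  have hcsucc : ∀ i : ℕ, c (i+1) = c i + η := by
    intro i; simp only [hc]; push_cast; ring
  have hc0 : c 0 = -R - 1 := by simp [hc]
  set m : ℕ := ⌈(2*R + 1)/η⌉₊ + 1 with hm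
  have hm0 : 0 < m := Nat.succ_pos _
  have hcm : R ≤ c m := by
    have h1 : (2*R + 1)/η ≤ (m : ℝ) := by
      have : ((⌈(2*R + 1)/η⌉₊ : ℝ)) ≤ m := by exact_mod_cast Nat.le_succ _
      calc (2*R + 1)/η ≤ (⌈(2*R + 1)/η⌉₊ : ℝ) := Nat.le_ceil _
      _ ≤ m := this
    have h2 : 2*R + 1 ≤ m * η := by
      rw [div_le_iff₀ hη0] at h1
      linarith
    simp only [hc]
    linarith
  clear_value c
  clear hc
  have hstep : ∀ i, a i < a (i+1) := by
    intro i
    have h1 := (haI i).2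
    have h2 := (haI (i+1)).1
    have := hcsucc i
    linarith
  have hamono : StrictMono a := strictMono_nat_of_lt_succ hstep
  have hgap : ∀ i, a (i+1) - a i < δ := by
    intro i
    have h1 := (haI i).1
    have h2 := (haI (i+1)).2
    have := hcsucc i
    linarith
  have ha0 : a 0 < -R := by
    have := (haI 0).2
    linarith
  have ham : R ≤ a m := by
    have := (haI m).1
    linarith
  have hcover : Icc (-R) R ⊆ ⋃ i ∈ Finset.range m, Ioc (a i) (a (i+1)) := by
    rw [biUnion_Ioc_succ hamono.monotone m hm0]
    exact fun x hx => ⟨ha0.trans_le hx.1, hx.2.trans ham⟩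
  set S : Finset ℕ := (Finset.range m).filter (fun i => (K ∩ Ioc (a i) (a (i+1))).Nonempty) with hSdef
  set B : Set ℝ := ⋃ i ∈ S, Ioc (a i) (a (i+1)) with hB
  have hBmeas : MeasurableSet B := by
    exact MeasurableSet.biUnion S.countable_toSet (fun i _ => measurableSet_Ioc)
  have hKB : K ⊆ B := by
    intro x hx
    obtain ⟨i, hi, hxi⟩ := mem_iUnion₂.1 (hcover (hKR hx))
    exact mem_iUnion₂.2 ⟨i, Finset.mem_filter.2 ⟨hi, ⟨x, hx, hxi⟩⟩, hxi⟩
  have hBU : B ⊆ U := by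
    intro x hx
    obtain ⟨i, hi, hxi⟩ := mem_iUnion₂.1 hx
    obtain ⟨y, hyK, hyi⟩ := (Finset.mem_filter.1 hi).2
    apply hthick
    rw [Metric.mem_thickening_iff]
    refine ⟨y, hyK, ?_⟩
    rw [Real.dist_eq, abs_sub_lt_iff]
    have := hgap i
    constructor
    · have := hxi.2; have := hyi.1; linarith
    · have := hyi.2; have := hxi.1; linarith
  have hdisj : (S : Set ℕ).PairwiseDisjoint (fun i => Ioc (a i) (a (i+1))) := by
    intro i _ j _ hij
    simp only [Function.onFun]
    rcases hij.lt_or_gt with h | h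
    · rw [Set.Ioc_disjoint_Ioc]
      exact le_trans (min_le_left _ _) (le_trans (hamono.monotone h) (le_max_right _ _))
    · rw [Set.Ioc_disjoint_Ioc]
      exact le_trans (min_le_right _ _) (le_trans (hamono.monotone h) (le_max_left _ _))
  have hsum : ∀ (κ : Measure ℝ), κ B = ∑ i ∈ S, κ (Ioc (a i) (a (i+1))) :=
    fun κ => measure_biUnion_finset hdisj (fun i _ => measurableSet_Ioc)
  refine ⟨B, hBmeas, hKB, hBU, ?_⟩
  have htoReal : Tendsto (fun n => (ν n B).toReal) atTop (𝓝 ((ρ B).toReal)) := by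
    have : ∀ n, (ν n B).toReal = ∑ i ∈ S, (ν n (Ioc (a i) (a (i+1)))).toReal := by
      intro n
      rw [hsum (ν n), ENNReal.toReal_sum (fun i _ => measure_ne_top _ _)]
    simp only [this, hsum ρ, ENNReal.toReal_sum (fun (i : ℕ) (_ : i ∈ S) => measure_ne_top ρ _)]
    exact tendsto_finset_sum _ (fun i _ => hconv (a i) (haD i) (a (i+1)) (haD (i+1)) (hstep i))
  have h1 : Tendsto (fun n => ν n B) atTop (𝓝 (ρ B)) := by
    have := ENNReal.tendsto_ofReal htoReal
    simpa [ENNReal.ofReal_toReal (measure_ne_top _ _)] using this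
  exact h1

noncomputable def clampBCF (p : ℕ) (R : ℝ) (hR : 1 ≤ R) : BoundedContinuousFunction ℝ ℝ :=
  BoundedContinuousFunction.ofNormedAddCommGroup (fun t => (max (min t R) (-R))^p)
    (((continuous_id.min continuous_const).max continuous_const).pow p) (R^p)
    (by
      intro t
      have h1 : |max (min t R) (-R)| ≤ R := by
        rw [abs_le]
        constructor
        · exact le_max_right _ _
        · exact max_le (min_le_right _ _) (by linarith)
      calc ‖(max (min t R) (-R))^p‖ = |max (min t R) (-R)|^p := by
            rw [Real.norm_eq_abs, abs_pow]
      _ ≤ R^p := pow_le_pow_left₀ (abs_nonneg _) h1 p)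

lemma clampBCF_apply (p : ℕ) (R : ℝ) (hR : 1 ≤ R) (t : ℝ) :
    clampBCF p R hR t = (max (min t R) (-R))^p := rfl

lemma clamp_diff_le {p : ℕ} {R : ℝ} (hR : 1 ≤ R) (t : ℝ) :
    |t^p - (max (min t R) (-R))^p| ≤ 2/R^p * t^(2*p) := by
  have hR0 : 0 < R := by linarith
  have ht2p : t^(2*p) = |t|^p * |t|^p := by
    rw [two_mul, pow_add, ← abs_pow, abs_mul_abs_self, ← pow_add]
  rcases le_or_gt |t| R with h | h
  · have hclamp : max (min t R) (-R) = t := by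
      rw [abs_le] at h
      rw [min_eq_left h.2, max_eq_left h.1]
    rw [hclamp, sub_self, abs_zero]
    have : 0 ≤ t^(2*p) := by rw [ht2p]; positivity
    positivity
  · have h1 : |max (min t R) (-R)| ≤ R := by
      rw [abs_le]
      exact ⟨le_max_right _ _, max_le (min_le_right _ _) (by linarith)⟩
    have h2 : |t^p - (max (min t R) (-R))^p| ≤ 2 * |t|^p := by
      calc |t^p - (max (min t R) (-R))^p| ≤ |t^p| + |(max (min t R) (-R))^p| := abs_sub _ _
      _ = |t|^p + |max (min t R) (-R)|^p := by rw [abs_pow, abs_pow]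
      _ ≤ |t|^p + |t|^p := by
          have := pow_le_pow_left₀ (abs_nonneg _) (h1.trans h.le) p
          linarith
      _ = 2 * |t|^p := by ring
    refine h2.trans ?_
    rw [ht2p, div_mul_eq_mul_div, le_div_iff₀ (by positivity)]
    have h3 : R^p ≤ |t|^p := pow_le_pow_left₀ hR0.le h.le p
    calc 2 * |t|^p * R^p ≤ 2 * |t|^p * |t|^p := by gcongr
    _ = 2 * (|t|^p * |t|^p) := by ring

lemma integral_clamp_diff (κ : Measure ℝ) [IsProbabilityMeasure κ] (p : ℕ) {R : ℝ} (hR : 1 ≤ R)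
    (hip : Integrable (fun t => t^p) κ) (hi2p : Integrable (fun t => t^(2*p)) κ) :
    |(∫ t, t^p ∂κ) - ∫ t, clampBCF p R hR t ∂κ| ≤ 2/R^p * ∫ t, t^(2*p) ∂κ := by
  have hbcf : Integrable (fun t => clampBCF p R hR t) κ := (clampBCF p R hR).integrable κ
  rw [← integral_sub hip hbcf]
  have habs : |∫ t, (t^p - clampBCF p R hR t) ∂κ| ≤ ∫ t, |t^p - clampBCF p R hR t| ∂κ := by
    simpa [Real.norm_eq_abs] using
      norm_integral_le_integral_norm (fun t => t^p - clampBCF p R hR t) (μ := κ)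
  calc |∫ t, (t^p - clampBCF p R hR t) ∂κ| ≤ ∫ t, |t^p - clampBCF p R hR t| ∂κ := habs
  _ ≤ ∫ t, 2/R^p * t^(2*p) ∂κ := by
      apply integral_mono (hip.sub hbcf).abs (hi2p.const_mul _)
      intro t
      exact clamp_diff_le hR t
  _ = 2/R^p * ∫ t, t^(2*p) ∂κ := integral_const_mul _ _

noncomputable def minBCF (p : ℕ) (k : ℕ) : BoundedContinuousFunction ℝ ℝ :=
  BoundedContinuousFunction.ofNormedAddCommGroup (fun t => min (t^(2*p)) k)
    ((continuous_pow _).min continuous_const) k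
    (by
      intro t
      rw [Real.norm_eq_abs, abs_le]
      constructor
      · have h1 : (0:ℝ) ≤ t^(2*p) := by rw [two_mul, pow_add]; exact mul_self_nonneg _
        have : (0:ℝ) ≤ min (t^(2*p)) k := le_min h1 (Nat.cast_nonneg k)
        linarith [Nat.cast_nonneg (α := ℝ) k]
      · exact min_le_right _ _)

lemma minBCF_apply (p k : ℕ) (t : ℝ) : minBCF p k t = min (t^(2*p)) k := rfl

lemma minBCF_nonneg (p k : ℕ) (t : ℝ) : 0 ≤ minBCF p k t := by
  rw [minBCF_apply]
  have h1 : (0:ℝ) ≤ t^(2*p) := by rw [two_mul, pow_add]; exact mul_self_nonneg _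
  exact le_min h1 (Nat.cast_nonneg k)

lemma limit_integrable (ρ : Measure ℝ) [IsProbabilityMeasure ρ] (ν : ℕ → Measure ℝ)
    [∀ n, IsProbabilityMeasure (ν n)]
    (hw : ∀ f : BoundedContinuousFunction ℝ ℝ,
      Tendsto (fun n => ∫ t, f t ∂ν n) atTop (𝓝 (∫ t, f t ∂ρ)))
    (p : ℕ) (hi : ∀ n, Integrable (fun t => t^(2*p)) (ν n)) {M : ℝ}
    (hM : ∀ n, ∫ t, t^(2*p) ∂ν n ≤ M) :
    Integrable (fun t => t^(2*p)) ρ := by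
  have h2p_nn : ∀ t : ℝ, (0:ℝ) ≤ t^(2*p) := fun t => by rw [two_mul, pow_add]; exact mul_self_nonneg _
  have hMk : ∀ k : ℕ, ∫ t, minBCF p k t ∂ρ ≤ M := by
    intro k
    refine le_of_tendsto (hw (minBCF p k)) (Eventually.of_forall fun n => ?_)
    calc ∫ t, minBCF p k t ∂ν n ≤ ∫ t, t^(2*p) ∂ν n := by
          apply integral_mono ((minBCF p k).integrable _) (hi n)
          intro t
          exact min_le_left _ _
    _ ≤ M := hM n
  have hlin : ∀ k : ℕ, ∫⁻ t, ENNReal.ofReal (minBCF p k t) ∂ρ ≤ ENNReal.ofReal M := by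
    intro k
    rw [← ofReal_integral_eq_lintegral_ofReal ((minBCF p k).integrable _)
      (Eventually.of_forall (minBCF_nonneg p k))]
    exact ENNReal.ofReal_le_ofReal (hMk k)
  have hsup : ∀ t : ℝ, (⨆ k : ℕ, ENNReal.ofReal (minBCF p k t)) = ENNReal.ofReal (t^(2*p)) := by
    intro t
    apply iSup_eq_of_tendsto
    · intro i j hij
      exact ENNReal.ofReal_le_ofReal (by rw [minBCF_apply, minBCF_apply]; exact min_le_min le_rfl (by exact_mod_cast hij))
    · apply ENNReal.tendsto_ofReal
      apply tendsto_atTop_of_eventually_const (i₀ := ⌈t^(2*p)⌉₊)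
      intro k hk
      rw [minBCF_apply]
      exact min_eq_left ((Nat.le_ceil _).trans (by exact_mod_cast hk))
  have hmc : ∫⁻ t, ENNReal.ofReal (t^(2*p)) ∂ρ ≤ ENNReal.ofReal M := by
    have := lintegral_iSup' (μ := ρ)
      (f := fun k t => ENNReal.ofReal (minBCF p k t))
      (fun k => (ENNReal.measurable_ofReal.comp
        (((continuous_pow (2*p)).measurable (α := ℝ)).min measurable_const)).aemeasurable)
      (Eventually.of_forall fun t i j hij =>
        ENNReal.ofReal_le_ofReal (by rw [minBCF_apply, minBCF_apply]; exact min_le_min le_rfl (by exact_mod_cast hij)))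
    simp only [hsup] at this
    rw [this]
    exact iSup_le hlin
  constructor
  · exact (continuous_pow (2*p)).aestronglyMeasurable
  · rw [hasFiniteIntegral_iff_ofReal (Eventually.of_forall h2p_nn)]
    exact lt_of_le_of_lt hmc ENNReal.ofReal_lt_top

lemma moments_tendsto (ρ : Measure ℝ) [IsProbabilityMeasure ρ] (ν : ℕ → Measure ℝ)
    [∀ n, IsProbabilityMeasure (ν n)]
    (hw : ∀ f : BoundedContinuousFunction ℝ ℝ,
      Tendsto (fun n => ∫ t, f t ∂ν n) atTop (𝓝 (∫ t, f t ∂ρ)))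
    (p : ℕ) (hiν : ∀ n q, Integrable (fun t => t^q) (ν n))
    (hiρ : ∀ q : ℕ, Integrable (fun t => t^q) ρ) {M : ℝ} (hM0 : 0 ≤ M)
    (hMν : ∀ n, ∫ t, t^(2*p) ∂ν n ≤ M) (hMρ : ∫ t, t^(2*p) ∂ρ ≤ M) :
    Tendsto (fun n => ∫ t, t^p ∂ν n) atTop (𝓝 (∫ t, t^p ∂ρ)) := by
  rcases Nat.eq_zero_or_pos p with rfl | hp
  · simp only [pow_zero, integral_const, measure_univ, ENNReal.toReal_one, smul_eq_mul, one_mul, probReal_univ]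
    exact tendsto_const_nhds
  refine Metric.tendsto_atTop.2 fun ε hε => ?_
  set R : ℝ := max 1 (6*M/ε + 1) with hRdef
  have hR1 : 1 ≤ R := le_max_left _ _
  have hR0 : 0 < R := by linarith
  have hRp : R ≤ R^p := le_self_pow₀ hR1 hp.ne'
  have hRbound : 2*M/R^p ≤ ε/3 := by
    have h1 : 2*M/R^p ≤ 2*M/R :=
      div_le_div_of_nonneg_left (by linarith) hR0 hRp
    have h2 : 6*M/ε + 1 ≤ R := le_max_right _ _
    have h3 : 2*M/R ≤ ε/3 := by
      rw [div_le_iff₀ hR0]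
      nlinarith [mul_le_mul_of_nonneg_left h2 hε.le, mul_div_cancel₀ (6*M) (ne_of_gt hε)]
    linarith
  obtain ⟨N, hN⟩ := Metric.tendsto_atTop.1 (hw (clampBCF p R hR1)) (ε/3) (by positivity)
  refine ⟨N, fun n hn => ?_⟩
  rw [Real.dist_eq]
  have hd1 : |(∫ t, t^p ∂ν n) - ∫ t, clampBCF p R hR1 t ∂ν n| ≤ ε/3 := by
    refine le_trans (integral_clamp_diff (ν n) p hR1 (hiν n p) (hiν n (2*p))) ?_
    have : 2/R^p * ∫ t, t^(2*p) ∂ν n ≤ 2/R^p * M := by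
      apply mul_le_mul_of_nonneg_left (hMν n) (by positivity)
    calc 2/R^p * ∫ t, t^(2*p) ∂ν n ≤ 2/R^p * M := this
    _ = 2*M/R^p := by ring
    _ ≤ ε/3 := hRbound
  have hd3 : |(∫ t, t^p ∂ρ) - ∫ t, clampBCF p R hR1 t ∂ρ| ≤ ε/3 := by
    refine le_trans (integral_clamp_diff ρ p hR1 (hiρ p) (hiρ (2*p))) ?_
    calc 2/R^p * ∫ t, t^(2*p) ∂ρ ≤ 2/R^p * M :=
        mul_le_mul_of_nonneg_left hMρ (by positivity)
    _ = 2*M/R^p := by ring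
    _ ≤ ε/3 := hRbound
  have hd2 : |(∫ t, clampBCF p R hR1 t ∂ν n) - ∫ t, clampBCF p R hR1 t ∂ρ| < ε/3 := by
    have := hN n hn
    rwa [Real.dist_eq] at this
  calc |(∫ t, t^p ∂ν n) - ∫ t, t^p ∂ρ|
      ≤ |(∫ t, t^p ∂ν n) - ∫ t, clampBCF p R hR1 t ∂ν n|
        + |(∫ t, clampBCF p R hR1 t ∂ν n) - ∫ t, t^p ∂ρ| := abs_sub_le _ _ _
  _ ≤ |(∫ t, t^p ∂ν n) - ∫ t, clampBCF p R hR1 t ∂ν n|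
        + (|(∫ t, clampBCF p R hR1 t ∂ν n) - ∫ t, clampBCF p R hR1 t ∂ρ|
          + |(∫ t, clampBCF p R hR1 t ∂ρ) - ∫ t, t^p ∂ρ|) := by
        gcongr
        exact abs_sub_le _ _ _
  _ < ε := by
      rw [abs_sub_comm] at hd3
      linarith


lemma integrable_pow_half (ρ : Measure ℝ) [IsProbabilityMeasure ρ] (q : ℕ)
    (h : Integrable (fun t => t^(2*q)) ρ) : Integrable (fun t => t^q) ρ := by
  have h1 : Integrable (fun t : ℝ => 1 + t^(2*q)) ρ := (integrable_const 1).add h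
  refine h1.mono ((continuous_pow q).aestronglyMeasurable) (Eventually.of_forall fun t => ?_)
  have h2 : (0:ℝ) ≤ t^(2*q) := by rw [two_mul, pow_add]; exact mul_self_nonneg _
  have habs2 : |t|^(2*q) = t^(2*q) := by rw [← abs_pow]; exact abs_of_nonneg h2
  rw [Real.norm_eq_abs, Real.norm_eq_abs, abs_pow, abs_of_nonneg (by linarith : (0:ℝ) ≤ 1 + t^(2*q))]
  rcases le_or_gt |t| 1 with h3 | h3
  · have := pow_le_one₀ (abs_nonneg t) h3 (n := q)
    linarith
  · have h4 : |t|^q ≤ |t|^(2*q) := pow_le_pow_right₀ h3.le (by omega)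
    linarith [h4.trans_eq habs2]

lemma mcdf_Ioc (ν : Measure ℝ) [IsProbabilityMeasure ν] {a b : ℝ} (hab : a ≤ b) :
    (ν (Ioc a b)).toReal = mcdf ν b - mcdf ν a := by
  rw [← Iic_sdiff_Iic, measure_diff (Iic_subset_Iic.2 hab) measurableSet_Iic.nullMeasurableSet
    (measure_ne_top ν _), ENNReal.toReal_sub_of_le (measure_mono (Iic_subset_Iic.2 hab))
    (measure_ne_top ν _)]
  rfl

lemma exists_subseq_weak (μ : Measure ℝ) [IsProbabilityMeasure μ] (ν : ℕ → Measure ℝ)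
    [∀ n, IsProbabilityMeasure (ν n)]
    (hmomμ : ∀ p : ℕ, Integrable (fun t => t ^ p) μ)
    (hmomn : ∀ n p, Integrable (fun t => t ^ p) (ν n))
    (hdet : ∀ ρ : Measure ℝ, IsProbabilityMeasure ρ →
      (∀ p : ℕ, Integrable (fun t => t ^ p) ρ) →
      (∀ p : ℕ, ∫ t, t ^ p ∂ρ = ∫ t, t ^ p ∂μ) → ρ = μ)
    (hconv : ∀ p : ℕ,
      Tendsto (fun n => ∫ t, t ^ p ∂(ν n)) atTop (nhds (∫ t, t ^ p ∂μ))) :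
    ∃ φ : ℕ → ℕ, StrictMono φ ∧ ∀ f : BoundedContinuousFunction ℝ ℝ,
      Tendsto (fun n => ∫ t, f t ∂ν (φ n)) atTop (𝓝 (∫ t, f t ∂μ)) := by
  obtain ⟨φ, G, hφ, hG01, hGconv⟩ := exists_subseq_rat ν
  have hG0 : ∀ q, 0 ≤ G q := fun q => (hG01 q).1
  have hG1 : ∀ q, G q ≤ 1 := fun q => (hG01 q).2
  have hGmono : ∀ q r : ℚ, q ≤ r → G q ≤ G r := by
    intro q r hqr
    exact le_of_tendsto_of_tendsto' (hGconv q) (hGconv r)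
      (fun n => mcdf_mono (ν (φ n)) (by exact_mod_cast hqr))
  -- moment bounds
  have hbdd : ∀ p : ℕ, ∃ M : ℝ, 0 ≤ M ∧ ∀ n, ∫ t, t ^ p ∂(ν n) ≤ M := by
    intro p
    obtain ⟨M, hM⟩ := (hconv p).bddAbove_range
    refine ⟨max M 0, le_max_right _ _, fun n => ?_⟩
    exact le_trans (hM (mem_range_self n)) (le_max_left _ _)
  obtain ⟨M, hM0, hM⟩ := hbdd 2
  -- tails
  have htail_gen : ∀ b : ℝ, 0 < b → ∃ R : ℝ, 0 < R ∧ M / R^2 ≤ b := by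
    intro b hb
    refine ⟨max 1 (M/b + 1), by positivity, ?_⟩
    set R := max 1 (M/b + 1) with hR
    have hR1 : 1 ≤ R := le_max_left _ _
    have hR2 : M/b + 1 ≤ R := le_max_right _ _
    have hRsq : R ≤ R^2 := by nlinarith
    have h1 : M / R^2 ≤ M / R := div_le_div_of_nonneg_left hM0 (by linarith) hRsq
    have h2 : M / R ≤ b := by
      rw [div_le_iff₀ (by linarith : (0:ℝ) < R)]
      nlinarith [mul_le_mul_of_nonneg_left hR2 hb.le, mul_div_cancel₀ M (ne_of_gt hb)]
    linarith
  have htail_bot : ∀ b : ℝ, 0 < b → ∃ x₀ : ℝ, ∀ q : ℚ, (q:ℝ) ≤ x₀ → G q ≤ b := by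
    intro b hb
    obtain ⟨R, hR, hRb⟩ := htail_gen b hb
    refine ⟨-R, fun q hq => ?_⟩
    refine le_trans (le_of_tendsto (hGconv q) (Eventually.of_forall fun n =>
      mcdf_tail_low (ν (φ n)) (hmomn (φ n) 2) (hM (φ n)) hR hq)) hRb
  have htail_top : ∀ b : ℝ, 0 < b → ∃ x₀ : ℝ, ∀ q : ℚ, x₀ ≤ (q:ℝ) → 1 - b ≤ G q := by
    intro b hb
    obtain ⟨R, hR, hRb⟩ := htail_gen b hb
    refine ⟨R, fun q hq => ?_⟩
    have h1 : 1 - M/R^2 ≤ G q := ge_of_tendsto (hGconv q) (Eventually.of_forall fun n =>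
      mcdf_tail_high (ν (φ n)) (hmomn (φ n) 2) (hM (φ n)) hR hq)
    linarith
  -- the Stieltjes function and limit measure
  set F := ratExtStj G hG0 hGmono with hF
  have hFeq : ⇑F = ratExt G := funext (ratExtStj_apply G hG0 hGmono)
  have hFbot : Tendsto F atBot (𝓝 0) := by
    rw [hFeq]; exact ratExt_tendsto_atBot hG0 htail_bot
  have hFtop : Tendsto F atTop (𝓝 1) := by
    rw [hFeq]; exact ratExt_tendsto_atTop hG0 hG1 htail_top
  set ρ : Measure ℝ := F.measure with hρ
  haveI hρP : IsProbabilityMeasure ρ := F.isProbabilityMeasure hFbot hFtop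
  -- dense set of continuity points
  set D : Set ℝ := {x | ContinuousAt (ratExt G) x} with hD
  have hDdense : Dense D := by
    have hcnt : Set.Countable {x | ¬ContinuousAt (ratExt G) x} :=
      (ratExt_mono hG0 hGmono).countable_not_continuousAt
    have := hcnt.dense_compl ℝ
    simpa [hD, compl_setOf] using this
  -- cdf convergence on D
  have hcdf : ∀ x ∈ D, Tendsto (fun n => mcdf (ν (φ n)) x) atTop (𝓝 (ratExt G x)) := by
    intro x hx
    exact tendsto_at_continuousAt (fun n => mcdf_mono (ν (φ n))) hG0 hGmono hGconv hx
  -- Ioc convergence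
  have hIoc : ∀ a ∈ D, ∀ b ∈ D, a < b →
      Tendsto (fun n => (ν (φ n) (Ioc a b)).toReal) atTop (𝓝 ((ρ (Ioc a b)).toReal)) := by
    intro a ha b hb hab
    have h1 : (ρ (Ioc a b)).toReal = ratExt G b - ratExt G a := by
      rw [hρ, F.measure_Ioc, ENNReal.toReal_ofReal]
      · rw [hFeq]
      · rw [hFeq]
        exact sub_nonneg.2 (ratExt_mono hG0 hGmono hab.le)
    rw [h1]
    have h2 : ∀ n, (ν (φ n) (Ioc a b)).toReal = mcdf (ν (φ n)) b - mcdf (ν (φ n)) a :=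
      fun n => mcdf_Ioc (ν (φ n)) hab.le
    simp only [h2]
    exact (hcdf b hb).sub (hcdf a ha)
  -- weak convergence via portmanteau
  set P : ProbabilityMeasure ℝ := ⟨ρ, hρP⟩ with hP
  set Pn : ℕ → ProbabilityMeasure ℝ := fun n => ⟨ν (φ n), inferInstance⟩ with hPn
  have h_opens : ∀ U : Set ℝ, IsOpen U → P U ≤ atTop.liminf (fun n => Pn n U) := by
    intro U hU
    have key : ρ U ≤ atTop.liminf (fun n => ν (φ n) U) :=
      isOpen_le_liminf (fun n => ν (φ n)) ρ hDdense hIoc hU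
    have aux : (↑(atTop.liminf (fun n => Pn n U)) : ℝ≥0∞) =
        atTop.liminf (fun n => ((Pn n U : ℝ≥0) : ℝ≥0∞)) := by
      refine Monotone.map_liminf_of_continuousAt (F := atTop) ENNReal.coe_mono (fun n => Pn n U)
        ENNReal.continuous_coe.continuousAt ?_ ?_
      · exact IsBoundedUnder.isCoboundedUnder_ge ⟨1, by simp⟩
      · exact ⟨0, by simp⟩
    rw [← ENNReal.coe_le_coe, aux]
    simp only [ProbabilityMeasure.ennreal_coeFn_eq_coeFn_toMeasure]
    exact key
  have htendP : Tendsto Pn atTop (𝓝 P) := MeasureTheory.tendsto_of_forall_isOpen_le_liminf h_opens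
  have hwk : ∀ f : BoundedContinuousFunction ℝ ℝ,
      Tendsto (fun n => ∫ t, f t ∂ν (φ n)) atTop (𝓝 (∫ t, f t ∂ρ)) := by
    intro f
    exact ProbabilityMeasure.tendsto_iff_forall_integral_tendsto.1 htendP f
  -- moments of ρ
  have hmomρ : ∀ p : ℕ, Integrable (fun t => t ^ p) ρ := by
    intro p
    apply integrable_pow_half
    obtain ⟨Mp, hMp0, hMp⟩ := hbdd (2*p)
    exact limit_integrable ρ (fun n => ν (φ n)) hwk p (fun n => hmomn (φ n) (2*p))
      (fun n => hMp (φ n))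
  have hmomeq : ∀ p : ℕ, ∫ t, t ^ p ∂ρ = ∫ t, t ^ p ∂μ := by
    intro p
    obtain ⟨Mp, hMp0, hMp⟩ := hbdd (2*p)
    set M' : ℝ := max Mp (∫ t, t^(2*p) ∂ρ) with hM'
    have h1 : Tendsto (fun n => ∫ t, t ^ p ∂ν (φ n)) atTop (𝓝 (∫ t, t ^ p ∂ρ)) :=
      moments_tendsto ρ (fun n => ν (φ n)) hwk p (fun n q => hmomn (φ n) q) hmomρ
        (le_trans hMp0 (le_max_left _ _))
        (fun n => le_trans (hMp (φ n)) (le_max_left _ _)) (le_max_right _ _)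
    have h2 : Tendsto (fun n => ∫ t, t ^ p ∂ν (φ n)) atTop (𝓝 (∫ t, t ^ p ∂μ)) :=
      (hconv p).comp hφ.tendsto_atTop
    exact tendsto_nhds_unique h1 h2
  have hρμ : ρ = μ := hdet ρ hρP hmomρ hmomeq
  exact ⟨φ, hφ, fun f => hρμ ▸ hwk f⟩

end MethodOfMomentsAux

/-- Method of moments: if `μ` is uniquely determined by its moments and all moments of
`μₙ` converge to those of `μ`, then `μₙ` converges weakly to `μ`. -/
theorem stmt15 (μ : Measure ℝ) [IsProbabilityMeasure μ] (μn : ℕ → Measure ℝ)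
    [∀ n, IsProbabilityMeasure (μn n)]
    (hmomμ : ∀ p : ℕ, Integrable (fun t => t ^ p) μ)
    (hmomn : ∀ n p, Integrable (fun t => t ^ p) (μn n))
    (hdet : ∀ ν : Measure ℝ, IsProbabilityMeasure ν →
      (∀ p : ℕ, Integrable (fun t => t ^ p) ν) →
      (∀ p : ℕ, ∫ t, t ^ p ∂ν = ∫ t, t ^ p ∂μ) → ν = μ)
    (hconv : ∀ p : ℕ,
      Tendsto (fun n => ∫ t, t ^ p ∂(μn n)) atTop (nhds (∫ t, t ^ p ∂μ))) :
    ∀ f : BoundedContinuousFunction ℝ ℝ,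
      Tendsto (fun n => ∫ t, f t ∂(μn n)) atTop (nhds (∫ t, f t ∂μ)) := by
  intro f
  apply tendsto_of_subseq_tendsto
  intro ns hns
  obtain ⟨ψ, hψmono, hψ⟩ := exists_subseq_weak μ (fun k => μn (ns k)) hmomμ
    (fun n p => hmomn (ns n) p) hdet (fun p => (hconv p).comp hns)
  exact ⟨ψ, hψ f⟩
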